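/- Let R be a commutative ring of characteristic 2, P the k×k cyclic right-shift permutation matrix, and X* = XP. Let A₁, A₂, B₁, B₂, C₁, C₂, D₁, D₂ be k×k circulant matrices over R and let Ω be the 4k×4k block matrix (A₁, A₂, B₁, B₂; A₂*, A₁, B₂*, B₁; C₁, C₂, D₁, D₂; C₂*, C₁, D₂*, D₁). Then Ω·Ωᵀ = I_{4k} if and only if: A₁A₁ᵀ + A₂A₂ᵀ + B₁B₁ᵀ + B₂B₂ᵀ = I_k, C₁C₁ᵀ + C₂C₂ᵀ + D₁D₁ᵀ + D₂D₂ᵀ = I_k, A₁(A₂*)ᵀ + A₂A₁ᵀ + B₁(B₂*)ᵀ + B₂B₁ᵀ = 0, A₁C₁ᵀ + A₂C₂ᵀ + B₁D₁ᵀ + B₂D₂ᵀ = 0, A₁(C₂*)ᵀ + A₂C₁ᵀ + B₁(D₂*)ᵀ + B₂D₁ᵀ = 0, and C₁(C₂*)ᵀ + C₂C₁ᵀ + D₁(D₂*)ᵀ + D₂D₁ᵀ = 0. -/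
import Mathlib


open Matrix

/-- The cyclic right-shift permutation matrix `P = (0, I_{n-1}; 1, 0)`. -/
def shiftP (n : ℕ) [NeZero n] (R : Type*) [CommRing R] : Matrix (Fin n) (Fin n) R :=
  Matrix.of fun i j => if j = i + 1 then (1 : R) else 0

/-- The circulant matrix `cir (b₀, …, b_{n-1})`, whose `(i, j)` entry is `b_{(j-i) mod n}`. -/
def cir {R : Type*} [CommRing R] {n : ℕ} (b : Fin n → R) : Matrix (Fin n) (Fin n) R :=
  Matrix.of fun i j => b (j - i)

section Helpers
variable {R : Type*} [CommRing R] {k : ℕ} [NeZero k]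

lemma cir_eq_circulant (b : Fin k → R) : cir b = Matrix.circulant (fun i => b (-i)) := by
  ext i j; simp [cir, Matrix.circulant_apply, neg_sub]

lemma shiftP_eq_cir : shiftP k R = cir (fun t : Fin k => if t = 1 then 1 else 0) := by
  ext i j
  simp only [shiftP, cir, Matrix.of_apply]
  congr 1
  simp [sub_eq_iff_eq_add, add_comm]

lemma cir_mul_comm (a b : Fin k → R) : cir a * cir b = cir b * cir a := by
  rw [cir_eq_circulant, cir_eq_circulant]
  exact Matrix.Fin.circulant_mul_comm _ _

lemma shiftP_mul_transpose : shiftP k R * (shiftP k R)ᵀ = 1 := by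
  ext i j
  simp only [Matrix.mul_apply, shiftP, Matrix.transpose_apply, Matrix.of_apply, Matrix.one_apply,
    ite_mul, one_mul, zero_mul]
  rw [Finset.sum_ite_eq' Finset.univ (i+1)]
  simp [Fin.ext_iff]

lemma P_comm (a : Fin k → R) : cir a * shiftP k R = shiftP k R * cir a := by
  rw [shiftP_eq_cir]; exact cir_mul_comm _ _

lemma P_shiftL (a : Fin k → R) (X : Matrix (Fin k) (Fin k) R) :
    shiftP k R * (cir a * X) = cir a * shiftP k R * X := by
  rw [← mul_assoc, ← P_comm]

lemma starP (M N : Matrix (Fin k) (Fin k) R) :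
    (M * shiftP k R) * (N * shiftP k R)ᵀ = M * Nᵀ := by
  rw [Matrix.transpose_mul, mul_assoc, ← mul_assoc (shiftP k R), shiftP_mul_transpose, one_mul]

lemma Pmul1 (a c : Fin k → R) :
    shiftP k R * (cir a * (cir c * shiftP k R)ᵀ) = cir a * (cir c)ᵀ := by
  rw [Matrix.transpose_mul, P_shiftL, mul_assoc, ← mul_assoc (shiftP k R),
    shiftP_mul_transpose, one_mul]

omit [NeZero k] in
lemma trans4 {M₁ N₁ M₂ N₂ M₃ N₃ M₄ N₄ Z : Matrix (Fin k) (Fin k) R}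
    (h : M₁ * N₁ᵀ + M₂ * N₂ᵀ + M₃ * N₃ᵀ + M₄ * N₄ᵀ = Z) :
    N₁ * M₁ᵀ + N₂ * M₂ᵀ + N₃ * M₃ᵀ + N₄ * M₄ᵀ = Zᵀ := by
  have := congrArg Matrix.transpose h
  simpa [Matrix.transpose_add, Matrix.transpose_mul] using this

lemma Pshift {a₁ c₁ a₂ c₂ a₃ c₃ a₄ c₄ : Fin k → R}
    (h : cir a₁ * (cir c₁ * shiftP k R)ᵀ + cir a₂ * (cir c₂)ᵀ
       + cir a₃ * (cir c₃ * shiftP k R)ᵀ + cir a₄ * (cir c₄)ᵀ = 0) :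
    cir a₂ * shiftP k R * (cir c₂)ᵀ + cir a₁ * (cir c₁)ᵀ
      + cir a₄ * shiftP k R * (cir c₄)ᵀ + cir a₃ * (cir c₃)ᵀ = 0 := by
  have h2 := congrArg (fun M => shiftP k R * M) h
  simp only [mul_add, Pmul1, mul_zero] at h2
  simp only [P_shiftL] at h2
  abel_nf at h2 ⊢
  exact h2

end Helpers

/-- For `k×k` circulant matrices `A₁, A₂, B₁, B₂, C₁, C₂, D₁, D₂` over a commutative ring of
characteristic 2, with `X* = X * P` for the cyclic permutation matrix `P`, the block matrix
`Ω = (A₁ A₂ B₁ B₂; A₂* A₁ B₂* B₁; C₁ C₂ D₁ D₂; C₂* C₁ D₂* D₁)` satisfies `Ω Ωᵀ = I`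
iff the six stated conditions hold. -/
theorem omega_star_selfdual_iff {R : Type*} [CommRing R] [CharP R 2] {k : ℕ} [NeZero k]
    (A₁ A₂ B₁ B₂ C₁ C₂ D₁ D₂ : Matrix (Fin k) (Fin k) R)
    (hA₁ : ∃ a, A₁ = cir a) (hA₂ : ∃ a, A₂ = cir a) (hB₁ : ∃ b, B₁ = cir b)
    (hB₂ : ∃ b, B₂ = cir b) (hC₁ : ∃ c, C₁ = cir c) (hC₂ : ∃ c, C₂ = cir c)
    (hD₁ : ∃ d, D₁ = cir d) (hD₂ : ∃ d, D₂ = cir d) :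
    (Matrix.fromBlocks
        (Matrix.fromBlocks A₁ A₂ (A₂ * shiftP k R) A₁)
        (Matrix.fromBlocks B₁ B₂ (B₂ * shiftP k R) B₁)
        (Matrix.fromBlocks C₁ C₂ (C₂ * shiftP k R) C₁)
        (Matrix.fromBlocks D₁ D₂ (D₂ * shiftP k R) D₁)) *
      (Matrix.fromBlocks
        (Matrix.fromBlocks A₁ A₂ (A₂ * shiftP k R) A₁)
        (Matrix.fromBlocks B₁ B₂ (B₂ * shiftP k R) B₁)
        (Matrix.fromBlocks C₁ C₂ (C₂ * shiftP k R) C₁)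
        (Matrix.fromBlocks D₁ D₂ (D₂ * shiftP k R) D₁))ᵀ = 1 ↔
    (A₁ * A₁ᵀ + A₂ * A₂ᵀ + B₁ * B₁ᵀ + B₂ * B₂ᵀ = 1 ∧
     C₁ * C₁ᵀ + C₂ * C₂ᵀ + D₁ * D₁ᵀ + D₂ * D₂ᵀ = 1 ∧
     A₁ * (A₂ * shiftP k R)ᵀ + A₂ * A₁ᵀ + B₁ * (B₂ * shiftP k R)ᵀ + B₂ * B₁ᵀ = 0 ∧
     A₁ * C₁ᵀ + A₂ * C₂ᵀ + B₁ * D₁ᵀ + B₂ * D₂ᵀ = 0 ∧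
     A₁ * (C₂ * shiftP k R)ᵀ + A₂ * C₁ᵀ + B₁ * (D₂ * shiftP k R)ᵀ + B₂ * D₁ᵀ = 0 ∧
     C₁ * (C₂ * shiftP k R)ᵀ + C₂ * C₁ᵀ + D₁ * (D₂ * shiftP k R)ᵀ + D₂ * D₁ᵀ = 0) := by
  obtain ⟨a₁, rfl⟩ := hA₁
  obtain ⟨a₂, rfl⟩ := hA₂
  obtain ⟨b₁, rfl⟩ := hB₁
  obtain ⟨b₂, rfl⟩ := hB₂
  obtain ⟨c₁, rfl⟩ := hC₁
  obtain ⟨c₂, rfl⟩ := hC₂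
  obtain ⟨d₁, rfl⟩ := hD₁
  obtain ⟨d₂, rfl⟩ := hD₂
  rw [show (1 : Matrix ((Fin k ⊕ Fin k) ⊕ (Fin k ⊕ Fin k)) ((Fin k ⊕ Fin k) ⊕ (Fin k ⊕ Fin k)) R)
      = Matrix.fromBlocks (Matrix.fromBlocks 1 0 0 1) (Matrix.fromBlocks 0 0 0 0)
          (Matrix.fromBlocks 0 0 0 0) (Matrix.fromBlocks 1 0 0 1) by
        simp [Matrix.fromBlocks_one]]
  simp only [Matrix.fromBlocks_transpose, Matrix.fromBlocks_multiply, Matrix.fromBlocks_add,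
    Matrix.fromBlocks_inj]
  constructor
  · rintro ⟨⟨h1, h3, -, -⟩, ⟨h4, h5, -, -⟩, -, h2, h6, -, -⟩
    refine ⟨?_, ?_, ?_, ?_, ?_, ?_⟩
    · rw [← h1]; abel
    · rw [← h2]; abel
    · rw [← h3]; abel
    · rw [← h4]; abel
    · rw [← h5]; abel
    · rw [← h6]; abel
  · rintro ⟨h1, h2, h3, h4, h5, h6⟩
    refine ⟨⟨?_, ?_, ?_, ?_⟩, ⟨?_, ?_, ?_, ?_⟩, ⟨?_, ?_, ?_, ?_⟩, ?_, ?_, ?_, ?_⟩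
    · rw [← h1]; abel
    · rw [← h3]; abel
    · have h := trans4 h3; rw [Matrix.transpose_zero] at h; rw [← h]; abel
    · simp only [starP]; rw [← h1]; abel
    · rw [← h4]; abel
    · rw [← h5]; abel
    · have h := Pshift h5; rw [← h]; abel
    · simp only [starP]; rw [← h4]; abel
    · have h := trans4 h4; rw [Matrix.transpose_zero] at h; rw [← h]; abel
    · have h := trans4 (Pshift h5); rw [Matrix.transpose_zero] at h; rw [← h]; abel
    · have h := trans4 h5; rw [Matrix.transpose_zero] at h; rw [← h]; abel
    · simp only [starP]
      have h := trans4 h4; rw [Matrix.transpose_zero] at h; rw [← h]; abel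
    · rw [← h2]; abel
    · rw [← h6]; abel
    · have h := trans4 h6; rw [Matrix.transpose_zero] at h; rw [← h]; abel
    · simp only [starP]; rw [← h2]; abel
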